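/- Let m ≥ 1 and n = 4m. Writing a quaternionic matrix as A + iB + jC + kD with real m×m matrices A, B, C, D, define φ(A + iB + jC + kD) to be the 4m×4m real matrix with m×m block rows (A, C, B, D), (−C, A, D, −B), (−B, −D, A, C), (−D, B, −C, A). Then φ is an injective group homomorphism from Sp(m) into O(4m), and the centralizer of H₂' = ⟨[J_{2m}], [K_m]⟩ in O(4m)/⟨−I⟩ equals {[φ(Y)·Z] : Y ∈ Sp(m), Z ∈ ⟨J_{2m}, K_m⟩}; that is, it is the internal product φ(Sp(m)/⟨−I⟩) × H₂'. -/

import Mathlib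

open Matrix

noncomputable section

/-- The orthogonal group `O(ι)` of real orthogonal matrices indexed by `ι`. -/
abbrev OG (ι : Type) [Fintype ι] [DecidableEq ι] := Matrix.orthogonalGroup ι ℝ

variable (ι : Type) [Fintype ι] [DecidableEq ι]

/-- `-I` as an element of the orthogonal group. -/
def negOne : OG ι := ⟨(-1 : Matrix ι ι ℝ), by
  rw [Matrix.mem_unitaryGroup_iff]; simp⟩

/-- The central subgroup `⟨-I⟩` of the orthogonal group. -/
def negSG : Subgroup (OG ι) := Subgroup.zpowers (negOne ι)

instance negSG_normal : (negSG ι).Normal := by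
  constructor
  intro x hx g
  obtain ⟨k, rfl⟩ := Subgroup.mem_zpowers_iff.mp hx
  have h2 : (g : Matrix ι ι ℝ) * ((g⁻¹ : OG ι) : Matrix ι ι ℝ) = 1 := by
    have := Matrix.UnitaryGroup.mul_val g g⁻¹
    rw [mul_inv_cancel] at this
    simpa using this.symm
  have hg : g * negOne ι * g⁻¹ = negOne ι := by
    apply Subtype.ext
    show (g : Matrix ι ι ℝ) * ((negOne ι : OG ι) : Matrix ι ι ℝ)
        * ((g⁻¹ : OG ι) : Matrix ι ι ℝ) = ((negOne ι : OG ι) : Matrix ι ι ℝ)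
    have hneg : ((negOne ι : OG ι) : Matrix ι ι ℝ) = -1 := rfl
    rw [hneg]
    calc (g : Matrix ι ι ℝ) * (-1 : Matrix ι ι ℝ) * ((g⁻¹ : OG ι) : Matrix ι ι ℝ)
        = -((g : Matrix ι ι ℝ) * ((g⁻¹ : OG ι) : Matrix ι ι ℝ)) := by rw [mul_neg, mul_one, neg_mul]
      _ = -1 := by rw [h2]
  have hmap : g * (negOne ι) ^ k * g⁻¹ = (g * negOne ι * g⁻¹) ^ k := by
    have := map_zpow (MulAut.conj g) (negOne ι) k
    simpa [MulAut.conj_apply] using this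
  rw [hmap, hg]
  exact Subgroup.zpow_mem _ (Subgroup.mem_zpowers _) k

/-- The projective orthogonal group `O(ι)/⟨-I⟩`. -/
abbrev PO := OG ι ⧸ negSG ι

/-- The table of real components for the regular representation of quaternionic matrices:
for `X = A + iB + jC + kD`, the 4×4 block pattern is
`(A, C, B, D), (-C, A, D, -B), (-B, -D, A, C), (-D, B, -C, A)`. -/
def phiTbl : Fin 4 → Fin 4 → Quaternion ℝ → ℝ :=
  ![![fun x => x.re,    fun x => x.imJ,   fun x => x.imI,  fun x => x.imK],
    ![fun x => -x.imJ,  fun x => x.re,    fun x => x.imK,  fun x => -x.imI],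
    ![fun x => -x.imI,  fun x => -x.imK,  fun x => x.re,   fun x => x.imJ],
    ![fun x => -x.imK,  fun x => x.imI,   fun x => -x.imJ, fun x => x.re]]

/-- The realification `φ` of a quaternionic `m × m` matrix, a real `4m × 4m` matrix. -/
def phi (m : ℕ) (X : Matrix (Fin m) (Fin m) (Quaternion ℝ)) :
    Matrix (Fin 4 × Fin m) (Fin 4 × Fin m) ℝ :=
  Matrix.of fun p q => phiTbl p.1 q.1 (X p.2 q.2)

/-- The block pattern of `J_{2m} = [[0, I_{2m}], [-I_{2m}, 0]]` in `m × m` blocks of a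
`4m × 4m` matrix. -/
def Jtbl : Fin 4 → Fin 4 → ℝ :=
  ![![0, 0, 1, 0], ![0, 0, 0, 1], ![-1, 0, 0, 0], ![0, -1, 0, 0]]

/-- The block pattern of `K_m`. -/
def Ktbl : Fin 4 → Fin 4 → ℝ :=
  ![![0, 0, 0, 1], ![0, 0, -1, 0], ![0, 1, 0, 0], ![-1, 0, 0, 0]]

/-- `J_{2m}` as a real `4m × 4m` matrix. -/
def Jmat (m : ℕ) : Matrix (Fin 4 × Fin m) (Fin 4 × Fin m) ℝ :=
  Matrix.of fun p q => if p.2 = q.2 then Jtbl p.1 q.1 else 0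

/-- `K_m` as a real `4m × 4m` matrix. -/
def Kmat (m : ℕ) : Matrix (Fin 4 × Fin m) (Fin 4 × Fin m) ℝ :=
  Matrix.of fun p q => if p.2 = q.2 then Ktbl p.1 q.1 else 0

/-- The subgroup `H₂' = ⟨[J_{2m}], [K_m]⟩` of `O(4m)/⟨-I⟩`. -/
def H2' (m : ℕ) : Subgroup (PO (Fin 4 × Fin m)) :=
  Subgroup.closure {x | ∃ U : OG (Fin 4 × Fin m),
    (QuotientGroup.mk U : PO (Fin 4 × Fin m)) = x ∧
    ((U : Matrix (Fin 4 × Fin m) (Fin 4 × Fin m) ℝ) = Jmat m ∨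
     (U : Matrix (Fin 4 × Fin m) (Fin 4 × Fin m) ℝ) = Kmat m)}

-- scalar-level lemmas
lemma phiTbl_add (a b : Fin 4) (x y : Quaternion ℝ) :
    phiTbl a b (x + y) = phiTbl a b x + phiTbl a b y := by
  fin_cases a <;> fin_cases b <;> simp [phiTbl] <;> ring

lemma phiTbl_mul (a c : Fin 4) (x y : Quaternion ℝ) :
    phiTbl a c (x * y) = ∑ b : Fin 4, phiTbl a b x * phiTbl b c y := by
  fin_cases a <;> fin_cases c <;>
    simp [phiTbl, Fin.sum_univ_four, Quaternion.re_mul, Quaternion.imI_mul,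
      Quaternion.imJ_mul, Quaternion.imK_mul] <;> ring

lemma phiTbl_one (a b : Fin 4) : phiTbl a b 1 = (1 : Matrix (Fin 4) (Fin 4) ℝ) a b := by
  fin_cases a <;> fin_cases b <;> simp [phiTbl, Matrix.one_apply, Matrix.vecHead, Matrix.vecTail,
    Quaternion.re_one, Quaternion.imI_one, Quaternion.imJ_one, Quaternion.imK_one]

lemma phiTbl_zero (a b : Fin 4) : phiTbl a b 0 = 0 := by
  fin_cases a <;> fin_cases b <;> simp [phiTbl, Matrix.vecHead, Matrix.vecTail,
    Quaternion.re_zero, Quaternion.imI_zero, Quaternion.imJ_zero, Quaternion.imK_zero]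

lemma phiTbl_star (a b : Fin 4) (x : Quaternion ℝ) :
    phiTbl a b (star x) = phiTbl b a x := by
  fin_cases a <;> fin_cases b <;> simp [phiTbl, Matrix.vecHead, Matrix.vecTail]

lemma phiTbl_J (a c : Fin 4) (x : Quaternion ℝ) :
    ∑ b : Fin 4, phiTbl a b x * Jtbl b c = ∑ b : Fin 4, Jtbl a b * phiTbl b c x := by
  fin_cases a <;> fin_cases c <;>
    simp [phiTbl, Jtbl, Fin.sum_univ_four, Matrix.vecHead, Matrix.vecTail] <;> ring

lemma phiTbl_K (a c : Fin 4) (x : Quaternion ℝ) :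
    ∑ b : Fin 4, phiTbl a b x * Ktbl b c = ∑ b : Fin 4, Ktbl a b * phiTbl b c x := by
  fin_cases a <;> fin_cases c <;>
    simp [phiTbl, Ktbl, Fin.sum_univ_four, Matrix.vecHead, Matrix.vecTail] <;> ring

variable {m : ℕ}

lemma phi_mul (X Y : Matrix (Fin m) (Fin m) (Quaternion ℝ)) :
    phi m (X * Y) = phi m X * phi m Y := by
  ext ⟨a, i⟩ ⟨c, j⟩
  show phiTbl a c ((X * Y) i j) = ∑ q : Fin 4 × Fin m, phiTbl a q.1 (X i q.2) * phiTbl q.1 c (Y q.2 j)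
  rw [Matrix.mul_apply, Fintype.sum_prod_type]
  have hadd : ∀ (s : Finset (Fin m)) , phiTbl a c (∑ k ∈ s, X i k * Y k j)
      = ∑ k ∈ s, phiTbl a c (X i k * Y k j) := by
    intro s
    induction s using Finset.induction with
    | empty => simp [phiTbl_zero]
    | insert _ _ h ih => rw [Finset.sum_insert h, Finset.sum_insert h, phiTbl_add, ih]
  rw [hadd]
  rw [Finset.sum_comm]
  refine Finset.sum_congr rfl fun k _ => ?_
  exact phiTbl_mul a c (X i k) (Y k j)

lemma phi_one : phi m 1 = 1 := by
  ext ⟨a, i⟩ ⟨b, j⟩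
  show phiTbl a b ((1 : Matrix (Fin m) (Fin m) (Quaternion ℝ)) i j) = _
  by_cases h : i = j
  · subst h
    simp only [Matrix.one_apply_eq, phiTbl_one, Matrix.one_apply, Prod.mk.injEq]
    by_cases hab : a = b <;> simp [hab]
  · rw [Matrix.one_apply_ne h, phiTbl_zero, Matrix.one_apply_ne]
    simp [Prod.ext_iff, h]

lemma phi_transpose (X : Matrix (Fin m) (Fin m) (Quaternion ℝ)) :
    (phi m X)ᵀ = phi m Xᴴ := by
  ext ⟨a, i⟩ ⟨b, j⟩
  show phiTbl b a (X j i) = phiTbl a b (star (X j i))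
  rw [phiTbl_star]

lemma phi_inj (X Y : Matrix (Fin m) (Fin m) (Quaternion ℝ)) (h : phi m X = phi m Y) :
    X = Y := by
  apply Matrix.ext; intro i j
  have e : ∀ a b : Fin 4, phiTbl a b (X i j) = phiTbl a b (Y i j) := fun a b =>
    congrFun (congrFun h (a, i)) (b, j)
  have h0 := e 0 0; have h1 := e 0 1; have h2 := e 0 2; have h3 := e 0 3
  simp only [phiTbl, Matrix.cons_val_zero, Matrix.cons_val_one, Matrix.head_cons,
    Matrix.vecHead, Matrix.vecTail] at h0 h1 h2 h3
  ext <;> first | exact h0 | exact h1 | exact h2 | exact h3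

lemma phi_comm_J (X : Matrix (Fin m) (Fin m) (Quaternion ℝ)) :
    phi m X * Jmat m = Jmat m * phi m X := by
  ext ⟨a, i⟩ ⟨c, j⟩
  show (∑ q : Fin 4 × Fin m, phiTbl a q.1 (X i q.2) * (if q.2 = j then Jtbl q.1 c else 0))
      = ∑ q : Fin 4 × Fin m, (if i = q.2 then Jtbl a q.1 else 0) * phiTbl q.1 c (X q.2 j)
  rw [Fintype.sum_prod_type, Fintype.sum_prod_type]
  simp only [mul_ite, mul_zero, ite_mul, zero_mul, Finset.sum_ite_eq, Finset.sum_ite_eq',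
    Finset.mem_univ, if_true]
  exact phiTbl_J a c (X i j)

lemma phi_comm_K (X : Matrix (Fin m) (Fin m) (Quaternion ℝ)) :
    phi m X * Kmat m = Kmat m * phi m X := by
  ext ⟨a, i⟩ ⟨c, j⟩
  show (∑ q : Fin 4 × Fin m, phiTbl a q.1 (X i q.2) * (if q.2 = j then Ktbl q.1 c else 0))
      = ∑ q : Fin 4 × Fin m, (if i = q.2 then Ktbl a q.1 else 0) * phiTbl q.1 c (X q.2 j)
  rw [Fintype.sum_prod_type, Fintype.sum_prod_type]
  simp only [mul_ite, mul_zero, ite_mul, zero_mul, Finset.sum_ite_eq, Finset.sum_ite_eq',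
    Finset.mem_univ, if_true]
  exact phiTbl_K a c (X i j)

/-- block-scalar matrix from a 4×4 table -/
def bmat (m : ℕ) (T : Fin 4 → Fin 4 → ℝ) : Matrix (Fin 4 × Fin m) (Fin 4 × Fin m) ℝ :=
  Matrix.of fun p q => if p.2 = q.2 then T p.1 q.1 else 0

lemma Jmat_eq : Jmat m = bmat m Jtbl := rfl
lemma Kmat_eq : Kmat m = bmat m Ktbl := rfl

lemma bmat_mul (S T : Fin 4 → Fin 4 → ℝ) :
    bmat m S * bmat m T = bmat m (fun a c => ∑ b : Fin 4, S a b * T b c) := by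
  ext ⟨a, i⟩ ⟨c, j⟩
  show (∑ q : Fin 4 × Fin m, (if i = q.2 then S a q.1 else 0) * (if q.2 = j then T q.1 c else 0))
      = if i = j then ∑ b : Fin 4, S a b * T b c else 0
  rw [Fintype.sum_prod_type_right]
  simp only [ite_mul, zero_mul, mul_ite, mul_zero, Finset.sum_ite_eq, Finset.mem_univ, if_true]
  by_cases h : i = j
  · subst h; simp
  · simp [Finset.sum_ite_eq', h]

lemma bmat_transpose (T : Fin 4 → Fin 4 → ℝ) :
    (bmat m T)ᵀ = bmat m (fun a b => T b a) := by
  ext ⟨a, i⟩ ⟨b, j⟩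
  show (if j = i then T b a else 0) = if i = j then T b a else 0
  by_cases h : i = j <;> simp [h, Ne.symm]

lemma bmat_neg_one : bmat m (fun a b => -(if a = b then 1 else 0)) = -1 := by
  ext ⟨a, i⟩ ⟨b, j⟩
  show (if i = j then -(if a = b then (1:ℝ) else 0) else 0) = -(if (a,i) = (b,j) then 1 else 0)
  by_cases h : i = j <;> by_cases h2 : a = b <;> simp [h, h2, Prod.ext_iff]

lemma J_mul_J : Jmat m * Jmat m = -1 := by
  rw [Jmat_eq, bmat_mul, ← bmat_neg_one]
  have tbl : (fun a c => ∑ b : Fin 4, Jtbl a b * Jtbl b c)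
      = fun a b : Fin 4 => -(if a = b then (1:ℝ) else 0) := by
    funext a c
    fin_cases a <;> fin_cases c <;>
      simp [Jtbl, Fin.sum_univ_four, Matrix.vecHead, Matrix.vecTail]
  rw [tbl]

lemma K_mul_K : Kmat m * Kmat m = -1 := by
  rw [Kmat_eq, bmat_mul, ← bmat_neg_one]
  have tbl : (fun a c => ∑ b : Fin 4, Ktbl a b * Ktbl b c)
      = fun a b : Fin 4 => -(if a = b then (1:ℝ) else 0) := by
    funext a c
    fin_cases a <;> fin_cases c <;>
      simp [Ktbl, Fin.sum_univ_four, Matrix.vecHead, Matrix.vecTail]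
  rw [tbl]

lemma J_mul_K : Jmat m * Kmat m = -(Kmat m * Jmat m) := by
  rw [Jmat_eq, Kmat_eq, bmat_mul, bmat_mul]
  have : ∀ (T : Fin 4 → Fin 4 → ℝ), -(bmat m T) = bmat m (fun a b => -(T a b)) := by
    intro T
    ext ⟨a, i⟩ ⟨b, j⟩
    show -(if i = j then T a b else 0) = if i = j then -(T a b) else 0
    by_cases h : i = j <;> simp [h]
  rw [this]
  have tbl : (fun a c => ∑ b : Fin 4, Jtbl a b * Ktbl b c)
      = fun a c => -(∑ b : Fin 4, Ktbl a b * Jtbl b c) := by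
    funext a c
    fin_cases a <;> fin_cases c <;>
      simp [Jtbl, Ktbl, Fin.sum_univ_four, Matrix.vecHead, Matrix.vecTail]
  rw [tbl]

lemma Jmat_transpose : (Jmat m)ᵀ = -(Jmat m) := by
  rw [Jmat_eq, bmat_transpose]
  ext ⟨a, i⟩ ⟨b, j⟩
  show (if i = j then Jtbl b a else 0) = -(if i = j then Jtbl a b else 0)
  by_cases h : i = j <;>
    [skip; simp [h]]
  fin_cases a <;> fin_cases b <;>
    simp [h, Jtbl, Matrix.vecHead, Matrix.vecTail]

lemma Kmat_transpose : (Kmat m)ᵀ = -(Kmat m) := by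
  rw [Kmat_eq, bmat_transpose]
  ext ⟨a, i⟩ ⟨b, j⟩
  show (if i = j then Ktbl b a else 0) = -(if i = j then Ktbl a b else 0)
  by_cases h : i = j <;>
    [skip; simp [h]]
  fin_cases a <;> fin_cases b <;>
    simp [h, Ktbl, Matrix.vecHead, Matrix.vecTail]

lemma J_mem : Jmat m ∈ Matrix.orthogonalGroup (Fin 4 × Fin m) ℝ := by
  rw [Matrix.mem_orthogonalGroup_iff]
  show Jmat m * (Jmat m)ᵀ = 1
  rw [Jmat_transpose, Matrix.mul_neg, J_mul_J]; simp

lemma K_mem : Kmat m ∈ Matrix.orthogonalGroup (Fin 4 × Fin m) ℝ := by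
  rw [Matrix.mem_orthogonalGroup_iff]
  show Kmat m * (Kmat m)ᵀ = 1
  rw [Kmat_transpose, Matrix.mul_neg, K_mul_K]; simp

lemma commutant4 (M : Matrix (Fin 4) (Fin 4) ℝ)
    (hJ : ∀ a b : Fin 4, ∑ c : Fin 4, M a c * Jtbl c b = ∑ c : Fin 4, Jtbl a c * M c b)
    (hK : ∀ a b : Fin 4, ∑ c : Fin 4, M a c * Ktbl c b = ∑ c : Fin 4, Ktbl a c * M c b) :
    ∀ a b : Fin 4, M a b = phiTbl a b ⟨M 0 0, M 0 2, M 0 1, M 0 3⟩ := by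
  have j00 := hJ 0 0
  have k00 := hK 0 0
  have j01 := hJ 0 1
  have k01 := hK 0 1
  have j02 := hJ 0 2
  have k02 := hK 0 2
  have j03 := hJ 0 3
  have k03 := hK 0 3
  have j10 := hJ 1 0
  have k10 := hK 1 0
  have j11 := hJ 1 1
  have k11 := hK 1 1
  have j12 := hJ 1 2
  have k12 := hK 1 2
  have j13 := hJ 1 3
  have k13 := hK 1 3
  have j20 := hJ 2 0
  have k20 := hK 2 0
  have j21 := hJ 2 1
  have k21 := hK 2 1
  have j22 := hJ 2 2
  have k22 := hK 2 2
  have j23 := hJ 2 3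
  have k23 := hK 2 3
  have j30 := hJ 3 0
  have k30 := hK 3 0
  have j31 := hJ 3 1
  have k31 := hK 3 1
  have j32 := hJ 3 2
  have k32 := hK 3 2
  have j33 := hJ 3 3
  have k33 := hK 3 3
  simp [Jtbl, Ktbl, Fin.sum_univ_four, Matrix.vecHead, Matrix.vecTail] at j00 k00 j01 k01 j02 k02 j03 k03 j10 k10 j11 k11 j12 k12 j13 k13 j20 k20 j21 k21 j22 k22 j23 k23 j30 k30 j31 k31 j32 k32 j33 k33
  intro a b
  fin_cases a <;> fin_cases b <;>
    simp [phiTbl, Matrix.vecHead, Matrix.vecTail] <;>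
    linarith

/-- extract quaternionic matrix from a real matrix commuting with J and K -/
def extractQ (m : ℕ) (W : Matrix (Fin 4 × Fin m) (Fin 4 × Fin m) ℝ) :
    Matrix (Fin m) (Fin m) (Quaternion ℝ) :=
  Matrix.of fun i j => (⟨W (0,i) (0,j), W (0,i) (2,j), W (0,i) (1,j), W (0,i) (3,j)⟩ : Quaternion ℝ)

lemma commutant_phi (W : Matrix (Fin 4 × Fin m) (Fin 4 × Fin m) ℝ)
    (hJ : W * Jmat m = Jmat m * W) (hK : W * Kmat m = Kmat m * W) :
    W = phi m (extractQ m W) := by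
  ext ⟨a, i⟩ ⟨b, j⟩
  have hJ' : ∀ a b : Fin 4, ∑ c : Fin 4, W (a,i) (c,j) * Jtbl c b
      = ∑ c : Fin 4, Jtbl a c * W (c,i) (b,j) := by
    intro a b
    have h := congrFun (congrFun hJ (a, i)) (b, j)
    show _ = ∑ c : Fin 4, Jtbl a c * W (c, i) (b, j)
    rw [show (∑ c : Fin 4, W (a,i) (c,j) * Jtbl c b)
        = ∑ q : Fin 4 × Fin m, W (a,i) q * (if q.2 = j then Jtbl q.1 b else 0) by
      rw [Fintype.sum_prod_type]
      simp [mul_ite, Finset.sum_ite_eq', Finset.mem_univ]]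
    rw [show (∑ c : Fin 4, Jtbl a c * W (c,i) (b,j))
        = ∑ q : Fin 4 × Fin m, (if i = q.2 then Jtbl a q.1 else 0) * W q (b,j) by
      rw [Fintype.sum_prod_type]
      simp [ite_mul, Finset.sum_ite_eq, Finset.mem_univ]]
    exact h
  have hK' : ∀ a b : Fin 4, ∑ c : Fin 4, W (a,i) (c,j) * Ktbl c b
      = ∑ c : Fin 4, Ktbl a c * W (c,i) (b,j) := by
    intro a b
    have h := congrFun (congrFun hK (a, i)) (b, j)
    rw [show (∑ c : Fin 4, W (a,i) (c,j) * Ktbl c b)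
        = ∑ q : Fin 4 × Fin m, W (a,i) q * (if q.2 = j then Ktbl q.1 b else 0) by
      rw [Fintype.sum_prod_type]
      simp [mul_ite, Finset.sum_ite_eq', Finset.mem_univ]]
    rw [show (∑ c : Fin 4, Ktbl a c * W (c,i) (b,j))
        = ∑ q : Fin 4 × Fin m, (if i = q.2 then Ktbl a q.1 else 0) * W q (b,j) by
      rw [Fintype.sum_prod_type]
      simp [ite_mul, Finset.sum_ite_eq, Finset.mem_univ]]
    exact h
  exact commutant4 (Matrix.of fun a b => W (a,i) (b,j)) hJ' hK' a b

-- real matrices: star = transpose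
lemma rstar {ι : Type} [Fintype ι] [DecidableEq ι] (A : Matrix ι ι ℝ) : star A = Aᵀ := by
  rw [Matrix.star_eq_conjTranspose, Matrix.conjTranspose_eq_transpose_of_trivial]

lemma phi_orth (X : Matrix (Fin m) (Fin m) (Quaternion ℝ))
    (hX : X ∈ unitary (Matrix (Fin m) (Fin m) (Quaternion ℝ))) :
    phi m X ∈ Matrix.orthogonalGroup (Fin 4 × Fin m) ℝ := by
  rw [Matrix.mem_orthogonalGroup_iff]
  rw [phi_transpose, ← phi_mul]
  rw [show Xᴴ = star X from rfl, hX.2, phi_one]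

/-- J as an element of the orthogonal group -/
def Jo (m : ℕ) : OG (Fin 4 × Fin m) := ⟨Jmat m, J_mem⟩
def Ko (m : ℕ) : OG (Fin 4 × Fin m) := ⟨Kmat m, K_mem⟩

lemma mem_negSG_iff {ι : Type} [Fintype ι] [DecidableEq ι] (x : OG ι) :
    x ∈ negSG ι ↔ x = 1 ∨ x = negOne ι := by
  constructor
  · intro hx
    obtain ⟨k, rfl⟩ := Subgroup.mem_zpowers_iff.mp hx
    have h2 : (negOne ι) * (negOne ι) = 1 := by
      apply Subtype.ext
      show (-1 : Matrix ι ι ℝ) * (-1) = 1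
      simp
    rcases Int.even_or_odd k with ⟨n, hn⟩ | ⟨n, hn⟩
    · left
      subst hn
      rw [show n + n = 2 * n by ring, _root_.zpow_mul]
      norm_num [zpow_two, sq, h2]
    · right
      subst hn
      rw [_root_.zpow_add, _root_.zpow_mul]
      norm_num [zpow_two, sq, h2]
  · rintro (rfl | rfl)
    · exact one_mem _
    · exact Subgroup.mem_zpowers _

lemma negOne_central {ι : Type} [Fintype ι] [DecidableEq ι] (g : OG ι) :
    g * negOne ι = negOne ι * g := by
  apply Subtype.ext
  show (g : Matrix ι ι ℝ) * (-1) = (-1) * (g : Matrix ι ι ℝ)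
  simp

/-- the generating set of H2' is {[Jo], [Ko]} -/
lemma H2'_gens (m : ℕ) : {x : PO (Fin 4 × Fin m) | ∃ U : OG (Fin 4 × Fin m),
    (QuotientGroup.mk U : PO (Fin 4 × Fin m)) = x ∧
    ((U : Matrix (Fin 4 × Fin m) (Fin 4 × Fin m) ℝ) = Jmat m ∨
     (U : Matrix (Fin 4 × Fin m) (Fin 4 × Fin m) ℝ) = Kmat m)}
    = {QuotientGroup.mk (Jo m), QuotientGroup.mk (Ko m)} := by
  ext x
  constructor
  · rintro ⟨U, rfl, (h | h)⟩
    · left; rw [show U = Jo m from Subtype.ext h]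
    · right; rw [show U = Ko m from Subtype.ext h]; rfl
  · rintro (rfl | rfl)
    · exact ⟨Jo m, rfl, Or.inl rfl⟩
    · exact ⟨Ko m, rfl, Or.inr rfl⟩

lemma mem_centralizer_H2'_iff {m : ℕ} (x : PO (Fin 4 × Fin m)) :
    x ∈ Subgroup.centralizer (H2' m : Set (PO (Fin 4 × Fin m)))
    ↔ ((QuotientGroup.mk (Jo m) : PO (Fin 4 × Fin m)) * x = x * QuotientGroup.mk (Jo m)
        ∧ (QuotientGroup.mk (Ko m) : PO (Fin 4 × Fin m)) * x = x * QuotientGroup.mk (Ko m)) := by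
  rw [Subgroup.mem_centralizer_iff]
  constructor
  · intro h
    have hJ : (QuotientGroup.mk (Jo m) : PO (Fin 4 × Fin m)) ∈ H2' m := by
      apply Subgroup.subset_closure
      exact ⟨Jo m, rfl, Or.inl rfl⟩
    have hK : (QuotientGroup.mk (Ko m) : PO (Fin 4 × Fin m)) ∈ H2' m := by
      apply Subgroup.subset_closure
      exact ⟨Ko m, rfl, Or.inr rfl⟩
    exact ⟨h _ hJ, h _ hK⟩
  · rintro ⟨hJ, hK⟩ g hg
    unfold H2' at hg
    induction hg using Subgroup.closure_induction with
    | mem y hy =>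
      rw [H2'_gens] at hy
      rcases hy with rfl | rfl
      exacts [hJ, hK]
    | one => simp
    | mul y z _ _ iy iz => rw [mul_assoc, iz, ← mul_assoc, iy, mul_assoc]
    | inv y _ iy =>
      calc y⁻¹ * x = y⁻¹ * (y * x * y⁻¹) := by rw [iy]; group
      _ = x * y⁻¹ := by group

lemma comb {R : Type*} [Ring R] (u z j : R)
    (h : (u*j = j*u ∧ z*j = j*z) ∨ (u*j = -(j*u) ∧ z*j = -(j*z))) :
    (u*z)*j = j*(u*z) := by
  rcases h with ⟨h1, h2⟩ | ⟨h1, h2⟩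
  · rw [mul_assoc, h2, ← mul_assoc, h1, mul_assoc]
  · rw [mul_assoc, h2, mul_neg, ← mul_assoc, h1, neg_mul, neg_neg, mul_assoc]

lemma hKJ : Kmat m * Jmat m = -(Jmat m * Kmat m) := by rw [J_mul_K, neg_neg]

lemma negJ_J : (-(Jmat m)) * Jmat m = Jmat m * (-(Jmat m)) := by rw [neg_mul, mul_neg]
lemma negJ_K : (-(Jmat m)) * Kmat m = -(Kmat m * (-(Jmat m))) := by
  rw [neg_mul, mul_neg, neg_neg, J_mul_K, neg_neg]
lemma negK_K : (-(Kmat m)) * Kmat m = Kmat m * (-(Kmat m)) := by rw [neg_mul, mul_neg]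
lemma negK_J : (-(Kmat m)) * Jmat m = -(Jmat m * (-(Kmat m))) := by
  rw [neg_mul, mul_neg, neg_neg, J_mul_K]
lemma negJK_J : (-(Jmat m * Kmat m)) * Jmat m = -(Jmat m * (-(Jmat m * Kmat m))) := by
  rw [neg_mul, mul_neg, neg_neg, mul_assoc, hKJ, mul_neg, neg_neg]
lemma negJK_K : (-(Jmat m * Kmat m)) * Kmat m = -(Kmat m * (-(Jmat m * Kmat m))) := by
  rw [neg_mul, mul_neg, neg_neg, mul_assoc, K_mul_K, ← mul_assoc, hKJ, neg_mul, mul_assoc,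
    K_mul_K]

lemma J_in_cl : Jmat m ∈ Submonoid.closure ({Jmat m, Kmat m} :
    Set (Matrix (Fin 4 × Fin m) (Fin 4 × Fin m) ℝ)) :=
  Submonoid.subset_closure (Set.mem_insert _ _)
lemma K_in_cl : Kmat m ∈ Submonoid.closure ({Jmat m, Kmat m} :
    Set (Matrix (Fin 4 × Fin m) (Fin 4 × Fin m) ℝ)) :=
  Submonoid.subset_closure (Set.mem_insert_of_mem _ rfl)

lemma neg_mem_orth {ι : Type} [Fintype ι] [DecidableEq ι] {A : Matrix ι ι ℝ}
    (h : A ∈ Matrix.orthogonalGroup ι ℝ) : -A ∈ Matrix.orthogonalGroup ι ℝ := by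
  rw [Matrix.mem_orthogonalGroup_iff] at h ⊢
  rw [transpose_neg, neg_mul_neg, h]

/-- sign behaviour of elements of the monoid generated by J and K -/
lemma cl_sign {Z : Matrix (Fin 4 × Fin m) (Fin 4 × Fin m) ℝ}
    (hZ : Z ∈ Submonoid.closure ({Jmat m, Kmat m} :
      Set (Matrix (Fin 4 × Fin m) (Fin 4 × Fin m) ℝ))) :
    (Z * Jmat m = Jmat m * Z ∨ Z * Jmat m = -(Jmat m * Z))
      ∧ (Z * Kmat m = Kmat m * Z ∨ Z * Kmat m = -(Kmat m * Z)) := by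
  induction hZ using Submonoid.closure_induction with
  | mem x hx =>
    rcases hx with rfl | rfl
    · exact ⟨Or.inl rfl, Or.inr (J_mul_K)⟩
    · refine ⟨Or.inr hKJ, Or.inl rfl⟩
  | one => exact ⟨Or.inl (by simp), Or.inl (by simp)⟩
  | mul x y hx hy ihx ihy =>
    constructor
    · rcases ihx.1 with h1 | h1 <;> rcases ihy.1 with h2 | h2
      · exact Or.inl (comb x y _ (Or.inl ⟨h1, h2⟩))
      · refine Or.inr ?_
        rw [mul_assoc, h2, mul_neg, ← mul_assoc, h1, mul_assoc]
      · refine Or.inr ?_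
        rw [mul_assoc, h2, ← mul_assoc, h1, neg_mul, mul_assoc]
      · exact Or.inl (comb x y _ (Or.inr ⟨h1, h2⟩))
    · rcases ihx.2 with h1 | h1 <;> rcases ihy.2 with h2 | h2
      · exact Or.inl (comb x y _ (Or.inl ⟨h1, h2⟩))
      · refine Or.inr ?_
        rw [mul_assoc, h2, mul_neg, ← mul_assoc, h1, mul_assoc]
      · refine Or.inr ?_
        rw [mul_assoc, h2, ← mul_assoc, h1, neg_mul, mul_assoc]
      · exact Or.inl (comb x y _ (Or.inr ⟨h1, h2⟩))

/-- the main construction: if U·Zi commutes with J and K then U has the required form -/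
lemma build (U : OG (Fin 4 × Fin m)) (Z Zi : Matrix (Fin 4 × Fin m) (Fin 4 × Fin m) ℝ)
    (hmem : Z ∈ Submonoid.closure ({Jmat m, Kmat m} :
      Set (Matrix (Fin 4 × Fin m) (Fin 4 × Fin m) ℝ)))
    (hZi : Zi * Z = 1)
    (hZiO : Zi ∈ Matrix.orthogonalGroup (Fin 4 × Fin m) ℝ)
    (hcomJ : ((U : Matrix (Fin 4 × Fin m) (Fin 4 × Fin m) ℝ) * Zi) * Jmat m
      = Jmat m * ((U : Matrix (Fin 4 × Fin m) (Fin 4 × Fin m) ℝ) * Zi))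
    (hcomK : ((U : Matrix (Fin 4 × Fin m) (Fin 4 × Fin m) ℝ) * Zi) * Kmat m
      = Kmat m * ((U : Matrix (Fin 4 × Fin m) (Fin 4 × Fin m) ℝ) * Zi)) :
    ∃ Y ∈ unitary (Matrix (Fin m) (Fin m) (Quaternion ℝ)),
    ∃ Z' ∈ Submonoid.closure ({Jmat m, Kmat m} :
        Set (Matrix (Fin 4 × Fin m) (Fin 4 × Fin m) ℝ)),
      (U : Matrix (Fin 4 × Fin m) (Fin 4 × Fin m) ℝ) = phi m Y * Z' := by
  set W := (U : Matrix (Fin 4 × Fin m) (Fin 4 × Fin m) ℝ) * Zi with hW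
  have hWO : W ∈ Matrix.orthogonalGroup (Fin 4 × Fin m) ℝ := Submonoid.mul_mem _ U.2 hZiO
  have hWphi : W = phi m (extractQ m W) := commutant_phi W hcomJ hcomK
  have h1 : star W * W = 1 := hWO.1
  have h2 : W * star W = 1 := hWO.2
  have hstar : star (extractQ m W) * extractQ m W = 1 := by
    apply phi_inj
    rw [phi_mul, phi_one]
    rw [show phi m (star (extractQ m W)) = (phi m (extractQ m W))ᵀ by
      rw [phi_transpose]; rfl]
    rw [← hWphi, ← rstar]
    exact h1
  have hstar2 : extractQ m W * star (extractQ m W) = 1 := by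
    apply phi_inj
    rw [phi_mul, phi_one]
    rw [show phi m (star (extractQ m W)) = (phi m (extractQ m W))ᵀ by
      rw [phi_transpose]; rfl]
    rw [← hWphi, ← rstar]
    exact h2
  refine ⟨extractQ m W, ⟨hstar, hstar2⟩, Z, hmem, ?_⟩
  rw [← hWphi, hW, mul_assoc, hZi, mul_one]

lemma mkcomm_iff {ι : Type} [Fintype ι] [DecidableEq ι] (U V : OG ι) :
    ((QuotientGroup.mk V : PO ι) * QuotientGroup.mk U
      = QuotientGroup.mk U * QuotientGroup.mk V)
    ↔ ((U : Matrix ι ι ℝ) * V = (V : Matrix ι ι ℝ) * U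
      ∨ (U : Matrix ι ι ℝ) * V = -((V : Matrix ι ι ℝ) * U)) := by
  rw [← QuotientGroup.mk_mul, ← QuotientGroup.mk_mul, QuotientGroup.eq, mem_negSG_iff]
  constructor
  · rintro (h1 | h1)
    · left
      have : V * U = U * V := inv_mul_eq_one.mp h1
      have h2 := congrArg Subtype.val this
      exact h2.symm
    · right
      have : U * V = (V * U) * negOne ι := by rw [← h1, mul_inv_cancel_left]
      have h2 := congrArg Subtype.val this
      show _ = _
      rw [show ((U * V : OG ι) : Matrix ι ι ℝ)
        = (U : Matrix ι ι ℝ) * (V : Matrix ι ι ℝ) from rfl] at h2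
      rw [h2]
      show ((V * U : OG ι) : Matrix ι ι ℝ) * (-1) = _
      rw [show ((V * U : OG ι) : Matrix ι ι ℝ)
        = (V : Matrix ι ι ℝ) * (U : Matrix ι ι ℝ) from rfl]
      simp
  · rintro (h1 | h1)
    · left
      rw [inv_mul_eq_one]
      exact Subtype.ext h1.symm
    · right
      rw [inv_mul_eq_iff_eq_mul]
      apply Subtype.ext
      show (U : Matrix ι ι ℝ) * (V : Matrix ι ι ℝ)
        = (V : Matrix ι ι ℝ) * (U : Matrix ι ι ℝ) * (-1)
      rw [h1]; simp

lemma JK_mul_JK : (Jmat m * Kmat m) * (Jmat m * Kmat m) = -1 := by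
  rw [mul_assoc, ← mul_assoc (Kmat m) (Jmat m) (Kmat m), hKJ, neg_mul, mul_assoc, K_mul_K]
  simp [J_mul_J]

/-- `φ` is an injective group homomorphism `Sp(m) → O(4m)`, and the
centralizer of `H₂' = ⟨[J_{2m}], [K_m]⟩` in `O(4m)/⟨-I⟩` is
`{[φ(Y)·Z] : Y ∈ Sp(m), Z ∈ ⟨J_{2m}, K_m⟩}`, i.e. the internal product
`φ(Sp(m)/⟨-I⟩) × H₂'`. -/
theorem centralizer_H2'_orthogonal (m : ℕ) (hm : 1 ≤ m) :
    (∀ X ∈ unitary (Matrix (Fin m) (Fin m) (Quaternion ℝ)),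
        phi m X ∈ Matrix.orthogonalGroup (Fin 4 × Fin m) ℝ) ∧
    phi m 1 = 1 ∧
    (∀ X ∈ unitary (Matrix (Fin m) (Fin m) (Quaternion ℝ)),
      ∀ Y ∈ unitary (Matrix (Fin m) (Fin m) (Quaternion ℝ)),
        phi m (X * Y) = phi m X * phi m Y) ∧
    (∀ X ∈ unitary (Matrix (Fin m) (Fin m) (Quaternion ℝ)),
      ∀ Y ∈ unitary (Matrix (Fin m) (Fin m) (Quaternion ℝ)),
        phi m X = phi m Y → X = Y) ∧
    ((Subgroup.centralizer (H2' m : Set (PO (Fin 4 × Fin m)))) :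
        Set (PO (Fin 4 × Fin m))) =
      {x | ∃ Y ∈ unitary (Matrix (Fin m) (Fin m) (Quaternion ℝ)),
        ∃ Z ∈ Submonoid.closure
            ({Jmat m, Kmat m} : Set (Matrix (Fin 4 × Fin m) (Fin 4 × Fin m) ℝ)),
          ∃ U : OG (Fin 4 × Fin m),
            (QuotientGroup.mk U : PO (Fin 4 × Fin m)) = x ∧
            (U : Matrix (Fin 4 × Fin m) (Fin 4 × Fin m) ℝ) = phi m Y * Z} := by
  refine ⟨fun X hX => phi_orth X hX, phi_one, fun X _ Y _ => phi_mul X Y,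
    fun X _ Y _ => phi_inj X Y, ?_⟩
  ext x
  simp only [SetLike.mem_coe, Set.mem_setOf_eq]
  rw [mem_centralizer_H2'_iff]
  constructor
  · rintro ⟨hJq, hKq⟩
    obtain ⟨U, rfl⟩ := QuotientGroup.mk_surjective x
    rw [mkcomm_iff] at hJq hKq
    have hJq' : (U : Matrix (Fin 4 × Fin m) (Fin 4 × Fin m) ℝ) * Jmat m = Jmat m * U
        ∨ (U : Matrix (Fin 4 × Fin m) (Fin 4 × Fin m) ℝ) * Jmat m
          = -(Jmat m * (U : Matrix (Fin 4 × Fin m) (Fin 4 × Fin m) ℝ)) := hJq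
    have hKq' : (U : Matrix (Fin 4 × Fin m) (Fin 4 × Fin m) ℝ) * Kmat m = Kmat m * U
        ∨ (U : Matrix (Fin 4 × Fin m) (Fin 4 × Fin m) ℝ) * Kmat m
          = -(Kmat m * (U : Matrix (Fin 4 × Fin m) (Fin 4 × Fin m) ℝ)) := hKq
    have main : ∃ Y ∈ unitary (Matrix (Fin m) (Fin m) (Quaternion ℝ)),
        ∃ Z' ∈ Submonoid.closure ({Jmat m, Kmat m} :
          Set (Matrix (Fin 4 × Fin m) (Fin 4 × Fin m) ℝ)),
        (U : Matrix (Fin 4 × Fin m) (Fin 4 × Fin m) ℝ) = phi m Y * Z' := by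
      rcases hJq' with hJ | hJ <;> rcases hKq' with hK | hK
      · exact build U 1 1 (one_mem _) (one_mul 1) (one_mem _)
          (by rw [mul_one]; exact hJ) (by rw [mul_one]; exact hK)
      · exact build U (Jmat m) (-(Jmat m)) J_in_cl
          (by rw [neg_mul, J_mul_J, neg_neg]) (neg_mem_orth J_mem)
          (comb _ _ _ (Or.inl ⟨hJ, negJ_J⟩)) (comb _ _ _ (Or.inr ⟨hK, negJ_K⟩))
      · exact build U (Kmat m) (-(Kmat m)) K_in_cl
          (by rw [neg_mul, K_mul_K, neg_neg]) (neg_mem_orth K_mem)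
          (comb _ _ _ (Or.inr ⟨hJ, negK_J⟩)) (comb _ _ _ (Or.inl ⟨hK, negK_K⟩))
      · exact build U (Jmat m * Kmat m) (-(Jmat m * Kmat m))
          (Submonoid.mul_mem _ J_in_cl K_in_cl)
          (by rw [neg_mul, JK_mul_JK, neg_neg])
          (neg_mem_orth (Submonoid.mul_mem _ J_mem K_mem))
          (comb _ _ _ (Or.inr ⟨hJ, negJK_J⟩)) (comb _ _ _ (Or.inr ⟨hK, negJK_K⟩))
    obtain ⟨Y, hY, Z', hZ', hval⟩ := main
    exact ⟨Y, hY, Z', hZ', U, rfl, hval⟩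
  · rintro ⟨Y, hY, Z, hZ, U, rfl, hval⟩
    constructor
    · rw [mkcomm_iff]
      rcases (cl_sign hZ).1 with h | h
      · left
        show (U : Matrix (Fin 4 × Fin m) (Fin 4 × Fin m) ℝ) * Jmat m = Jmat m * U
        rw [hval, mul_assoc, h, ← mul_assoc, phi_comm_J, mul_assoc]
      · right
        show (U : Matrix (Fin 4 × Fin m) (Fin 4 × Fin m) ℝ) * Jmat m
          = -(Jmat m * (U : Matrix (Fin 4 × Fin m) (Fin 4 × Fin m) ℝ))
        rw [hval, mul_assoc, h, mul_neg, ← mul_assoc, phi_comm_J, mul_assoc]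
    · rw [mkcomm_iff]
      rcases (cl_sign hZ).2 with h | h
      · left
        show (U : Matrix (Fin 4 × Fin m) (Fin 4 × Fin m) ℝ) * Kmat m = Kmat m * U
        rw [hval, mul_assoc, h, ← mul_assoc, phi_comm_K, mul_assoc]
      · right
        show (U : Matrix (Fin 4 × Fin m) (Fin 4 × Fin m) ℝ) * Kmat m
          = -(Kmat m * (U : Matrix (Fin 4 × Fin m) (Fin 4 × Fin m) ℝ))
        rw [hval, mul_assoc, h, mul_neg, ← mul_assoc, phi_comm_K, mul_assoc]

end
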